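/- Fix p, q ∈ ℝ. The Hessian determinant of F at the singular point (p,q) satisfies (F_xx·F_yy − F_xy²)(p,q) = −4(4p + q²), and (p,q) is an isolated point of Beloch's curve 𝓕 — i.e., there exists ε > 0 such that every (x,y) with F(x,y) = 0 and ‖(x,y) − (p,q)‖ < ε equals (p,q) — if and only if 4p + q² < 0. -/

import Mathlib

set_option maxHeartbeats 1600000

/-- Beloch's polynomial `F(x,y)` associated with `P = (p,q)`. -/
def belochF (p q x y : ℝ) : ℝ :=
  2 * (q - y) ^ 2 - (q + y) * (q - y) * (p - x) - (p - x) ^ 2 * (p + x)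

lemma hasDerivAt_cubic (a b c d x : ℝ) :
    HasDerivAt (fun x : ℝ => a + b*x + c*x^2 + d*x^3) (b + 2*c*x + 3*d*x^2) x := by
  have h := ((hasDerivAt_const x a).add ((hasDerivAt_id x).const_mul b)).add
    (((hasDerivAt_pow 2 x).const_mul c).add ((hasDerivAt_pow 3 x).const_mul d))
  convert h using 1
  · rfl
  · rfl
  · funext t; simp [id]; ring
  · push_cast; ring

lemma deriv_cubic (a b c d : ℝ) :
    deriv (fun x : ℝ => a + b*x + c*x^2 + d*x^3) = fun x => b + 2*c*x + 3*d*x^2 := by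
  funext x; exact (hasDerivAt_cubic a b c d x).deriv

lemma beloch_isolated (p q : ℝ) (hA : 4 * p + q ^ 2 < 0) :
    ∃ ε > (0 : ℝ), ∀ x y : ℝ, belochF p q x y = 0 →
      Real.sqrt ((x - p) ^ 2 + (y - q) ^ 2) < ε → (x, y) = (p, q) := by
  have ha : 0 < -(4*p+q^2) := by linarith
  obtain ⟨a, ha_def⟩ : ∃ a : ℝ, a = -(4*p+q^2) := ⟨_, rfl⟩
  rw [← ha_def] at ha
  have hden : 0 < 4 + 2*q^2 + 2*a := by positivity
  have hδ : 0 < a^2/(4+2*q^2+2*a) := by positivity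
  refine ⟨Real.sqrt (a^2/(4+2*q^2+2*a)), Real.sqrt_pos.mpr hδ, fun x y hF hlt => ?_⟩
  simp only [belochF] at hF
  have hQ : 2*(y-q)^2 - 2*q*(x-p)*(y-q) - 2*p*(x-p)^2 = (x-p)*((x-p)^2+(y-q)^2) := by
    linear_combination hF
  obtain ⟨u, hu⟩ : ∃ u : ℝ, u = x - p := ⟨_, rfl⟩
  obtain ⟨v, hv⟩ : ∃ v : ℝ, v = y - q := ⟨_, rfl⟩
  rw [← hu, ← hv] at hQ hlt
  obtain ⟨s, hs_def⟩ : ∃ s : ℝ, s = u^2 + v^2 := ⟨_, rfl⟩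
  rw [← hs_def] at hQ hlt
  have hs0 : 0 ≤ s := by rw [hs_def]; positivity
  have hsδ : s < a^2/(4+2*q^2+2*a) := by
    have h1 : Real.sqrt s ^ 2 < Real.sqrt (a^2/(4+2*q^2+2*a)) ^ 2 :=
      pow_lt_pow_left₀ hlt (Real.sqrt_nonneg _) (by norm_num)
    rwa [Real.sq_sqrt hs0, Real.sq_sqrt hδ.le] at h1
  have hδ' : s*(4+2*q^2+2*a) < a^2 := (lt_div_iff₀ hden).mp hsδ
  have hkey : 2*u*s = (2*v - q*u)^2 + a*u^2 := by
    rw [ha_def]; linear_combination -2*hQ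
  have hsz : s = 0 := by
    by_contra hne
    have hspos : 0 < s := lt_of_le_of_ne hs0 (Ne.symm hne)
    have hu0 : 0 < u := by
      rcases lt_trichotomy u 0 with h | h | h
      · nlinarith [sq_nonneg (2*v - q*u), sq_nonneg u]
      · have h4 : (2*v - q*u)^2 + a*u^2 = 0 := by rw [← hkey, h]; ring
        have h5 : (2*v - q*u)^2 = 0 := by
          nlinarith [mul_nonneg ha.le (sq_nonneg u), sq_nonneg (2*v - q*u)]
        have h6 : 2*v - q*u = 0 := (pow_eq_zero_iff two_ne_zero).mp h5
        have hqu : q*u = 0 := by rw [h, mul_zero]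
        have hv0 : v = 0 := by linarith
        rw [hs_def, h, hv0] at hne; simp at hne
      · exact h
    have hub : a*u ≤ 2*s := by nlinarith [sq_nonneg (2*v - q*u)]
    have h1 : a*(2*u*s) ≤ 4*s^2 := by
      have := mul_le_mul_of_nonneg_left hub (show (0:ℝ) ≤ 2*s by linarith)
      nlinarith [this]
    have hkey' : a*(2*u*s) = a*(2*v - q*u)^2 + a^2*u^2 := by linear_combination a*hkey
    have h2 : a*(2*v - q*u)^2 ≤ 4*s^2 := by
      nlinarith [mul_nonneg (mul_nonneg ha.le ha.le) (sq_nonneg u)]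
    have h3 : a^2*u^2 ≤ 4*s^2 := by
      nlinarith [mul_nonneg ha.le (sq_nonneg (2*v - q*u))]
    have h4 : a^2*(4*v^2) ≤ 8*a*s^2 + 8*q^2*s^2 := by
      nlinarith [sq_nonneg (a*(2*v - 2*q*u)),
        mul_le_mul_of_nonneg_left h2 (show (0:ℝ) ≤ 2*a by linarith),
        mul_le_mul_of_nonneg_left h3 (show (0:ℝ) ≤ 2*q^2 by positivity)]
    have hfin : 4*s*a^2 ≤ s^2*(16 + 8*a + 8*q^2) := by
      have hs4 : 4*s*a^2 = 4*(a^2*u^2) + a^2*(4*v^2) := by rw [hs_def]; ring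
      nlinarith [h3, h4]
    nlinarith [mul_lt_mul_of_pos_left hδ' (show (0:ℝ) < 4*s by linarith), hfin]
  have h7 : u^2 = 0 := by nlinarith [sq_nonneg v, sq_nonneg u]
  have h8 : v^2 = 0 := by nlinarith [sq_nonneg v, sq_nonneg u]
  have hu0 : u = 0 := (pow_eq_zero_iff two_ne_zero).mp h7
  have hv0 : v = 0 := (pow_eq_zero_iff two_ne_zero).mp h8
  have hx : x = p := by rw [hu0] at hu; linarith [hu.symm]
  have hy : y = q := by rw [hv0] at hv; linarith [hv.symm]
  rw [hx, hy]

lemma beloch_not_isolated (p q : ℝ) (hA : 0 ≤ 4*p+q^2) (ε : ℝ) (hε : 0 < ε) :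
    ∃ x y : ℝ, belochF p q x y = 0 ∧
      Real.sqrt ((x - p) ^ 2 + (y - q) ^ 2) < ε ∧ (x, y) ≠ (p, q) := by
  obtain ⟨B, hB_def⟩ : ∃ B : ℝ, B = |q| + Real.sqrt (q^2+6*|p|+2) := ⟨_, rfl⟩
  have hB0 : 0 ≤ B := by rw [hB_def]; positivity
  have h1B : 0 < 1 + B := by linarith
  obtain ⟨u, hu0, hu1, huε, hg⟩ : ∃ u : ℝ, 0 < u ∧ u ≤ 1 ∧ u ≤ ε/(2*(1+B)) ∧
      0 < 4*p+q^2 + (2-2*p)*u - u^2 := by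
    rcases eq_or_lt_of_le hA with hA0 | hApos
    · have hp : p ≤ 0 := by nlinarith [sq_nonneg q]
      refine ⟨min 1 (ε/(2*(1+B))), ?_, min_le_left _ _, min_le_right _ _, ?_⟩
      · positivity
      · have h1 : 0 < min 1 (ε/(2*(1+B))) := by positivity
        have h2 : min 1 (ε/(2*(1+B))) ≤ 1 := min_le_left _ _
        nlinarith
    · have hden2 : 0 < 3+2*|p| := by positivity
      refine ⟨min 1 (min (ε/(2*(1+B))) ((4*p+q^2)/(2*(3+2*|p|)))), ?_, min_le_left _ _,
        le_trans (min_le_right _ _) (min_le_left _ _), ?_⟩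
      · have : 0 < (4*p+q^2)/(2*(3+2*|p|)) := by positivity
        positivity
      · have h1 : 0 < min 1 (min (ε/(2*(1+B))) ((4*p+q^2)/(2*(3+2*|p|)))) := by
          have : 0 < (4*p+q^2)/(2*(3+2*|p|)) := by positivity
          positivity
        have h2 : min 1 (min (ε/(2*(1+B))) ((4*p+q^2)/(2*(3+2*|p|)))) ≤ 1 := min_le_left _ _
        have h3 : min 1 (min (ε/(2*(1+B))) ((4*p+q^2)/(2*(3+2*|p|)))) ≤
            (4*p+q^2)/(2*(3+2*|p|)) := le_trans (min_le_right _ _) (min_le_right _ _)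
        have h4 := (le_div_iff₀ (by positivity : (0:ℝ) < 2*(3+2*|p|))).mp h3
        have h5 : -|p| ≤ p := neg_abs_le p
        have h6 : p ≤ |p| := le_abs_self p
        nlinarith
  have h2u : 0 < 2 - u := by linarith
  obtain ⟨w, hw_def⟩ : ∃ w : ℝ, w = Real.sqrt (4*p+q^2 + (2-2*p)*u - u^2) := ⟨_, rfl⟩
  have hw0 : 0 ≤ w := hw_def ▸ Real.sqrt_nonneg _
  have hw2 : w^2 = 4*p+q^2 + (2-2*p)*u - u^2 := hw_def ▸ Real.sq_sqrt hg.le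
  have hwB : w ≤ Real.sqrt (q^2+6*|p|+2) := by
    rw [hw_def]
    apply Real.sqrt_le_sqrt
    have h5 : -|p| ≤ p := neg_abs_le p
    have h6 : p ≤ |p| := le_abs_self p
    nlinarith
  have hqwB : |q| + w ≤ B := by rw [hB_def]; linarith
  obtain ⟨v, hv_def⟩ : ∃ v : ℝ, v = u*(q+w)/(2-u) := ⟨_, rfl⟩
  have hveq : v*(2-u) = u*(q+w) := by rw [hv_def]; field_simp
  have hv2 : v^2 ≤ u^2*B^2 := by
    have hqw2 : (q+w)^2 ≤ B^2 := by
      have := abs_nonneg q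
      have h7 : -|q| ≤ q := neg_abs_le q
      have h8 : q ≤ |q| := le_abs_self q
      nlinarith
    have h9 : (v*(2-u))^2 = (u*(q+w))^2 := by rw [hveq]
    have h2u1 : (1:ℝ) ≤ (2-u)^2 := by nlinarith
    nlinarith [h9, mul_le_mul_of_nonneg_left hqw2 (sq_nonneg u),
      mul_le_mul_of_nonneg_left h2u1 (sq_nonneg v)]
  refine ⟨p + u, q + v, ?_, ?_, ?_⟩
  · have e1 : v*(2-u) - u*(q+w) = 0 := by rw [hveq]; ring
    have H : (2*(q-(q+v))^2 - (q+(q+v))*(q-(q+v))*(p-(p+u)) - (p-(p+u))^2*(p+(p+u)))*(2-u)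
        = 0 := by
      linear_combination (v*(2-u) + u*(q+w) - 2*q*u) * e1 + u^2 * hw2
    simp only [belochF]
    rcases mul_eq_zero.mp H with h | h
    · exact h
    · linarith
  · have hx : p + u - p = u := by ring
    have hy : q + v - q = v := by ring
    rw [hx, hy]
    rw [show ε = Real.sqrt (ε^2) by rw [Real.sqrt_sq hε.le]]
    apply Real.sqrt_lt_sqrt (by positivity)
    have h10 : u*(2*(1+B)) ≤ ε := (le_div_iff₀ (by positivity)).mp huε
    have h11 : u*(1+B) ≤ ε/2 := by linarith
    have h12 : (u*(1+B))^2 ≤ (ε/2)^2 := by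
      have := mul_nonneg hu0.le h1B.le
      nlinarith
    nlinarith [hv2, h12, mul_nonneg (sq_nonneg u) hB0, hε]
  · intro hcon
    rw [Prod.mk.injEq] at hcon
    have := hcon.1
    linarith

/-- The Hessian determinant of `F` at the singular point `(p,q)` equals
`-4(4p + q²)`, and `(p,q)` is an isolated point of Beloch's curve (for the
Euclidean norm) iff `4p + q² < 0`. -/
theorem stmt_17 (p q : ℝ) :
    (deriv (deriv (fun x => belochF p q x q)) p *
        deriv (deriv (fun y => belochF p q p y)) q -
      (deriv (fun y => deriv (fun x => belochF p q x y) p) q) ^ 2 =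
        -4 * (4 * p + q ^ 2)) ∧
    ((∃ ε > (0 : ℝ), ∀ x y : ℝ, belochF p q x y = 0 →
        Real.sqrt ((x - p) ^ 2 + (y - q) ^ 2) < ε → (x, y) = (p, q)) ↔
      4 * p + q ^ 2 < 0) := by
  constructor
  · have e1 : (fun x => belochF p q x q) = fun x : ℝ => (-p^3) + p^2*x + p*x^2 + (-1)*x^3 := by
      funext x; simp only [belochF]; ring
    have e1' : (fun x : ℝ => p^2 + 2*p*x + 3*(-1)*x^2) =
        fun x : ℝ => p^2 + (2*p)*x + (-3)*x^2 + 0*x^3 := by funext x; ring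
    have e2 : (fun y => belochF p q p y) = fun y : ℝ => (2*q^2) + (-4*q)*y + 2*y^2 + 0*y^3 := by
      funext y; simp only [belochF]; ring
    have e2' : (fun y : ℝ => -4*q + 2*2*y + 3*0*y^2) =
        fun y : ℝ => (-4*q) + 4*y + 0*y^2 + 0*y^3 := by funext y; ring
    have e3 : (fun y : ℝ => deriv (fun x => belochF p q x y) p) =
        fun y : ℝ => (q^2) + 0*y + (-1)*y^2 + 0*y^3 := by
      funext y
      have : (fun x => belochF p q x y) =
          fun x : ℝ => (2*(q-y)^2 - (q^2-y^2)*p - p^3) + ((q^2-y^2)+p^2)*x + p*x^2 + (-1)*x^3 := by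
        funext x; simp only [belochF]; ring
      rw [this, deriv_cubic]; ring
    rw [e1, deriv_cubic, e1', deriv_cubic, e2, deriv_cubic, e2', deriv_cubic, e3, deriv_cubic]
    ring
  · constructor
    · intro ⟨ε, hε, h⟩
      by_contra hA'
      push_neg at hA'
      obtain ⟨x, y, hF, hdist, hne⟩ := beloch_not_isolated p q hA' ε hε
      exact hne (h x y hF hdist)
    · exact beloch_isolated p q
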